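/- Let G be a finite simple graph with spanning tree T and co-tree C = G \ E(T), and let E_cs ⊆ E(G). Then G ⫽ E_cs is cycle-invariant if and only if E_cs ⊆ E(T) and every edge of E_cs lies on none of the fundamental tree-paths of co-tree edges (equivalently, the rows of the Tucker representation T_{(T,C)} corresponding to E_cs are all zero). -/

import Mathlib

/-- The simple graph contraction of `G` over the partition of its vertex set given by the
fibers of `f` (cells are fibers): distinct cells are adjacent iff some pair of their members
is adjacent in `G` (self-loops and duplicate edges removed). -/
def contraction {V W : Type*} (G : SimpleGraph V) (f : V → W) : SimpleGraph W where
  Adj i j := i ≠ j ∧ ∃ u v, f u = i ∧ f v = j ∧ G.Adj u v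
  symm := ⟨fun _ _ ⟨hne, u, v, hu, hv, h⟩ => ⟨hne.symm, v, u, hv, hu, h.symm⟩⟩
  loopless := ⟨fun _ ⟨h, _⟩ => h rfl⟩

theorem contraction_adj {V W : Type*} {G : SimpleGraph V} {f : V → W} {i j : W} :
    (contraction G f).Adj i j ↔ i ≠ j ∧ ∃ u v, f u = i ∧ f v = j ∧ G.Adj u v := Iff.rfl

/-- The edge-based contraction `G ⫽ E_cs`: the contraction of `G` over the partition of
`V(G)` into connected components of the graph `(V(G), E_cs)`. -/
def contractionE {V : Type*} (G : SimpleGraph V) (Ecs : Set (Sym2 V)) :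
    SimpleGraph (SimpleGraph.fromEdgeSet Ecs).ConnectedComponent :=
  contraction G (SimpleGraph.fromEdgeSet Ecs).connectedComponentMk

/-- The type of simple cycles of a graph (as cycle walks based at a vertex). -/
def CycleType {V : Type*} (G : SimpleGraph V) := Σ v : V, {w : G.Walk v v // w.IsCycle}

namespace CInvAux

open SimpleGraph Walk

variable {V : Type*} {W : Type*} {G : SimpleGraph V}

/-- A walk is determined by its support. -/
theorem walk_ext : ∀ {a b : V} (p q : G.Walk a b), p.support = q.support → p = q := by
  intro a b p
  induction p with
  | nil =>
    intro q h
    cases q with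
    | nil => rfl
    | cons hq q' =>
      exfalso
      have := congrArg List.length h
      simp [Walk.length_support] at this
  | cons hp p' ih =>
    intro q h
    cases q with
    | nil =>
      exfalso
      have := congrArg List.length h
      simp [Walk.length_support] at this
    | cons hq q' =>
      simp only [Walk.support_cons, List.cons.injEq, true_and] at h
      have hc := congrArg List.head? h
      rw [p'.support_eq_cons, q'.support_eq_cons] at hc
      simp only [List.head?_cons, Option.some.injEq] at hc
      subst hc
      exact congrArg _ (ih q' h)

/-- Lift a walk along a subgraph relation. -/
def liftWalk {G G' : SimpleGraph V} (h : G ≤ G') : ∀ {u v : V}, G.Walk u v → G'.Walk u v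
  | _, _, .nil => .nil
  | _, _, .cons ha p => .cons (h ha) (liftWalk h p)

@[simp] theorem support_liftWalk {G G' : SimpleGraph V} (h : G ≤ G') :
    ∀ {u v : V} (p : G.Walk u v), (liftWalk h p).support = p.support := by
  intro u v p
  induction p with
  | nil => rfl
  | cons ha p ih => simp [liftWalk, ih]

@[simp] theorem edges_liftWalk {G G' : SimpleGraph V} (h : G ≤ G') :
    ∀ {u v : V} (p : G.Walk u v), (liftWalk h p).edges = p.edges := by
  intro u v p
  induction p with
  | nil => rfl
  | cons ha p ih => simp [liftWalk, ih]

@[simp] theorem length_liftWalk {G G' : SimpleGraph V} (h : G ≤ G') :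
    ∀ {u v : V} (p : G.Walk u v), (liftWalk h p).length = p.length := by
  intro u v p
  induction p with
  | nil => rfl
  | cons ha p ih => simp [liftWalk, ih]

/-- If the "closing" edge `s(b,a)` occurs on a walk from `a` to `b` with no duplicate
vertices, then the walk has length 1. -/
theorem length_eq_one_of_closing_edge {A B : V} (q : G.Walk A B) (hnd : q.support.Nodup)
    (hmem : s(B, A) ∈ q.edges) : q.length = 1 := by
  cases q with
  | nil => simp at hmem
  | cons hadj q' =>
    rename_i C
    rw [Walk.edges_cons, List.mem_cons] at hmem
    simp only [Walk.support_cons, List.nodup_cons] at hnd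
    rcases hmem with hmem | hmem
    · rw [Sym2.eq_iff] at hmem
      rcases hmem with ⟨hBA, hAC⟩ | ⟨hBC, -⟩
      · exact absurd hAC hadj.ne
      · cases q' with
        | nil => simp
        | cons h2 q'' =>
          exfalso
          have hBmem : B ∈ q''.support := q''.end_mem_support
          have hCnot : C ∉ q''.support := by
            have := hnd.2
            simp only [Walk.support_cons, List.nodup_cons] at this
            exact this.1
          exact hCnot (hBC ▸ hBmem)
    · exact absurd (q'.snd_mem_support_of_mem_edges hmem) hnd.1

theorem adj_of_length_eq_one : ∀ {a b : V} (q : G.Walk a b), q.length = 1 → G.Adj a b := by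
  intro a b q
  cases q with
  | nil => simp
  | cons h q' =>
    cases q' with
    | nil => intro _; exact h
    | cons h2 q'' => intro hl; simp [Walk.length_cons] at hl

/-- A closed walk of length ≥ 3 whose support-tail has no duplicates is a cycle. -/
theorem isCycle_of_tail_nodup {v : V} (c : G.Walk v v) (h3 : 3 ≤ c.length)
    (hnd : c.support.tail.Nodup) : c.IsCycle := by
  cases c with
  | nil => simp at h3
  | cons hadj q =>
    rename_i u
    have hq : q.support.Nodup := by simpa using hnd
    have hpath : q.IsPath := Walk.IsPath.mk' hq
    rw [Walk.cons_isCycle_iff]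
    refine ⟨hpath, fun hmem => ?_⟩
    have := length_eq_one_of_closing_edge q hq hmem
    rw [Walk.length_cons] at h3
    omega

/-- The head dart of a nonempty walk starts at the start vertex. -/
theorem head_dart_fst : ∀ {u v : V} (p : G.Walk u v) (d : G.Dart),
    p.darts.head? = some d → d.toProd.1 = u := by
  intro u v p d h
  cases p with
  | nil => simp [Walk.darts_nil] at h
  | cons hadj q =>
    simp only [Walk.darts_cons, List.head?_cons, Option.some.injEq] at h
    rw [← h]

/-- In a cycle, darts are determined by their first vertex. -/
theorem dart_eq_of_fst_eq {v : V} {c : G.Walk v v} (hc : c.IsCycle) {d d' : G.Dart}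
    (hd : d ∈ c.darts) (hd' : d' ∈ c.darts) (h : d.toProd.1 = d'.toProd.1) : d = d' := by
  have hmap : c.darts.map (·.toProd.1) = c.support.dropLast := c.map_fst_darts
  have hnodup : (c.support.dropLast).Nodup := by
    cases c with
    | nil => simp at hc
    | cons hadj q =>
      rename_i u
      have hq : q.support.Nodup := hc.2
      have hlast : q.support.dropLast ++ [v] = q.support := by
        have h1 := List.dropLast_append_getLast q.support_ne_nil
        rwa [q.getLast_support] at h1
      have hnd2 : (q.support.dropLast ++ [v]).Nodup := by rw [hlast]; exact hq
      rw [List.nodup_append] at hnd2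
      have hvnot : v ∉ q.support.dropLast := fun hv => hnd2.2.2 v hv v (by simp) rfl
      simp only [Walk.support_cons]
      rw [List.dropLast_cons_of_ne_nil q.support_ne_nil]
      exact List.nodup_cons.mpr ⟨hvnot, hnd2.1⟩
  have := List.inj_on_of_nodup_map (hmap ▸ hnodup)
  exact this hd hd' h

end CInvAux

namespace CInvAux2
open SimpleGraph Walk CInvAux

/-- Deduplication of adjacent-equal entries, as a relation. -/
inductive DD {α : Type*} : List α → List α → Prop
  | single (a : α) : DD [a] [a]
  | dup {a : α} {l m : List α} : DD (a :: l) m → DD (a :: a :: l) m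
  | step {a b : α} {l m : List α} : a ≠ b → DD (b :: l) m → DD (a :: b :: l) (a :: m)

theorem DD.ne_nil {α : Type*} {l m : List α} (h : DD l m) : l ≠ [] := by
  cases h <;> simp

theorem DD.exists_cons {α : Type*} {l m : List α} (h : DD l m) :
    ∃ (b : α) (l' : List α), l = b :: l' := by
  cases h with
  | single a => exact ⟨a, [], rfl⟩
  | dup h => exact ⟨_, _, rfl⟩
  | step hne h => exact ⟨_, _, rfl⟩

theorem DD.head_eq {α : Type*} {l m : List α} (h : DD l m) :
    ∀ {a : α} {l' : List α}, l = a :: l' → ∃ m', m = a :: m' := by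
  induction h with
  | single b =>
    intro a l' hl
    injection hl with h1 _
    subst h1; exact ⟨[], rfl⟩
  | dup h ih =>
    intro a l' hl
    injection hl with h1 _
    subst h1; exact ih rfl
  | step hne h ih =>
    intro a l' hl
    injection hl with h1 _
    subst h1; exact ⟨_, rfl⟩

theorem DD.det {α : Type*} {l m m' : List α} (h : DD l m) : DD l m' → m = m' := by
  induction h generalizing m' with
  | single a =>
    intro h'
    cases h' with
    | single => rfl
  | dup h ih =>
    intro h'
    cases h' with
    | dup h2 => exact ih h2
    | step hne h2 => exact absurd rfl hne
  | step hne h ih =>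
    intro h'
    cases h' with
    | dup h2 => exact absurd rfl hne
    | step hne2 h2 => rw [ih h2]

theorem DD.length_le {α : Type*} {l m : List α} (h : DD l m) : m.length ≤ l.length := by
  induction h with
  | single a => simp
  | dup h ih => simpa using Nat.le_succ_of_le ih
  | step hne h ih => simpa using ih

theorem DD.const {α : Type*} {C : α} :
    ∀ l : List α, l ≠ [] → (∀ x ∈ l, x = C) → DD l [C]
  | [], hne, _ => absurd rfl hne
  | [a], _, h => by
      have ha : a = C := h a (by simp)
      subst ha; exact DD.single a
  | a :: b :: t, _, h => by
      have ha : a = C := h a (by simp)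
      have hb : b = C := h b (by simp)
      subst ha; subst hb
      exact DD.dup (DD.const _ (by simp) (fun x hx => h x (List.mem_cons_of_mem _ hx)))

theorem DD.append_const {α : Type*} {C : α} :
    ∀ l₁ : List α, l₁ ≠ [] → (∀ x ∈ l₁, x = C) → ∀ (l₂ m : List α), DD l₂ m →
      (∀ y l₂', l₂ = y :: l₂' → y ≠ C) → DD (l₁ ++ l₂) (C :: m)
  | [], hne, _ => absurd rfl hne
  | [a], _, h => by
      intro l₂ m h₂ hhead
      have ha : a = C := h a (by simp)
      subst ha
      obtain ⟨b, l₂', rfl⟩ := h₂.exists_cons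
      exact DD.step (Ne.symm (hhead b l₂' rfl)) h₂
  | a :: b :: t, _, h => by
      intro l₂ m h₂ hhead
      have ha : a = C := h a (by simp)
      have hb : b = C := h b (by simp)
      subst ha; subst hb
      exact DD.dup (DD.append_const _ (by simp)
        (fun x hx => h x (List.mem_cons_of_mem _ hx)) l₂ m h₂ hhead)

theorem DD.cons_ne {α : Type*} {a : α} {l m : List α} (h : DD l m)
    (hne : ∀ y l', l = y :: l' → a ≠ y) : DD (a :: l) (a :: m) := by
  obtain ⟨b, l', rfl⟩ := h.exists_cons
  exact DD.step (hne b l' rfl) h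

end CInvAux2
namespace CInvMain
open SimpleGraph Walk CInvAux CInvAux2

section Push

variable {V W : Type*} {G : SimpleGraph V}

/-- Push a walk down to the contraction, provided all its darts cross cells. -/
def pushWalk (f : V → W) : ∀ {a b : V} (p : G.Walk a b),
    (∀ d ∈ p.darts, f d.toProd.1 ≠ f d.toProd.2) → (contraction G f).Walk (f a) (f b)
  | _, _, .nil, _ => .nil
  | _, _, .cons ha p, h =>
      .cons (contraction_adj.mpr ⟨h _ (by rw [Walk.darts_cons]; exact List.mem_cons_self), _, _, rfl, rfl, ha⟩)
        (pushWalk f p fun d hd => h d (by rw [Walk.darts_cons]; exact List.mem_cons_of_mem _ hd))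

theorem support_pushWalk (f : V → W) : ∀ {a b : V} (p : G.Walk a b) (h),
    (pushWalk f p h).support = p.support.map f
  | _, _, .nil, _ => rfl
  | _, _, .cons ha p, h => by
      simp only [pushWalk, Walk.support_cons, List.map_cons]
      rw [support_pushWalk]

theorem length_pushWalk (f : V → W) : ∀ {a b : V} (p : G.Walk a b) (h),
    (pushWalk f p h).length = p.length
  | _, _, .nil, _ => rfl
  | _, _, .cons ha p, h => by
      simp only [pushWalk, Walk.length_cons]
      rw [length_pushWalk]

end Push

section Mk

variable {V : Type*}

theorem mk_eq_of_mem_support {G' : SimpleGraph V} :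
    ∀ {u v z : V} (P : G'.Walk u v), z ∈ P.support →
      G'.connectedComponentMk z = G'.connectedComponentMk u := by
  intro u v z P
  induction P with
  | nil => intro h; simp at h; rw [h]
  | cons ha P ih =>
    intro h
    rw [Walk.support_cons, List.mem_cons] at h
    rcases h with rfl | h
    · rfl
    · exact (ih h).trans (ConnectedComponent.connectedComponentMk_eq_of_adj ha).symm

end Mk


section Lift

variable {V : Type*} {G : SimpleGraph V} {Ecs : Set (Sym2 V)}

theorem hH_le (hE : Ecs ⊆ G.edgeSet) : SimpleGraph.fromEdgeSet Ecs ≤ G := by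
  intro a b hab
  rw [SimpleGraph.fromEdgeSet_adj] at hab
  exact (G.mem_edgeSet).mp (hE hab.1)

/-- Lift a walk of the contraction to a walk of `G`, with control on components. -/
theorem exists_lift_walk [DecidableEq V] (hE : Ecs ⊆ G.edgeSet) :
    ∀ {C D} (q' : (contractionE G Ecs).Walk C D), q'.support.Nodup →
    ∀ (y xe : V), (SimpleGraph.fromEdgeSet Ecs).connectedComponentMk y = C →
      (SimpleGraph.fromEdgeSet Ecs).connectedComponentMk xe = D →
    ∃ w : G.Walk y xe,
      DD (w.support.map (SimpleGraph.fromEdgeSet Ecs).connectedComponentMk) q'.support ∧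
      w.support.Nodup ∧
      ∀ z ∈ w.support, (SimpleGraph.fromEdgeSet Ecs).connectedComponentMk z ∈ q'.support := by
  intro C D q'
  induction q' with
  | nil =>
    intro hn y xe hy hxe
    obtain ⟨P0⟩ := SimpleGraph.ConnectedComponent.exact (hy.trans hxe.symm)
    have P := P0.toPath
    refine ⟨liftWalk (hH_le hE) P.1, ?_, ?_, ?_⟩
    · rw [support_liftWalk]
      rw [Walk.support_nil]
      apply DD.const
      · simp [P.1.support_ne_nil]
      · intro x hx
        obtain ⟨z, hz, rfl⟩ := List.mem_map.mp hx
        exact (mk_eq_of_mem_support P.1 hz).trans hy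
    · rw [support_liftWalk]; exact P.2.support_nodup
    · intro z hz
      rw [support_liftWalk] at hz
      rw [Walk.support_nil]
      simp [(mk_eq_of_mem_support P.1 hz).trans hy]
  | cons h r' ih =>
    intro hn y xe hy hxe
    obtain ⟨hne, x₀, y₂, hx₀, hy₂, hadj⟩ := contraction_adj.mp h
    rename_i C₀ C₂ D₀
    rw [Walk.support_cons, List.nodup_cons] at hn
    obtain ⟨P0⟩ := SimpleGraph.ConnectedComponent.exact (hy.trans hx₀.symm)
    have P := P0.toPath
    obtain ⟨wr, hwrDD, hwrnd, hwrcomp⟩ := ih hn.2 y₂ xe hy₂ hxe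
    refine ⟨(liftWalk (hH_le hE) P.1).append (Walk.cons hadj wr), ?_, ?_, ?_⟩
    · rw [Walk.support_append, Walk.support_cons, List.tail_cons, support_liftWalk,
        List.map_append, Walk.support_cons]
      apply DD.append_const
      · simp [P.1.support_ne_nil]
      · intro x hx
        obtain ⟨z, hz, rfl⟩ := List.mem_map.mp hx
        exact (mk_eq_of_mem_support P.1 hz).trans hy
      · exact hwrDD
      · intro z l' hl hzC
        have h1 : wr.support = y₂ :: wr.support.tail := wr.support_eq_cons
        rw [h1, List.map_cons, List.cons.injEq] at hl
        apply hn.1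
        have h2 : C₂ = C₀ := by rw [← hy₂, hl.1, hzC]
        rw [← h2]
        exact r'.start_mem_support
    · rw [Walk.support_append, Walk.support_cons, List.tail_cons, support_liftWalk]
      rw [List.nodup_append]
      refine ⟨P.2.support_nodup, hwrnd, ?_⟩
      intro z hz z' hz2 hzz
      subst hzz
      have h1 : _ = C₀ := (mk_eq_of_mem_support P.1 hz).trans hy
      have h2 := hwrcomp z hz2
      rw [h1] at h2
      exact hn.1 h2
    · intro z hz
      rw [Walk.support_append, Walk.support_cons, List.tail_cons, support_liftWalk,
        List.mem_append] at hz
      rw [Walk.support_cons, List.mem_cons]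
      rcases hz with hz | hz
      · exact Or.inl ((mk_eq_of_mem_support P.1 hz).trans hy)
      · exact Or.inr (hwrcomp z hz)

end Lift


section CycleLift

variable {V : Type*} {G : SimpleGraph V} {Ecs : Set (Sym2 V)}

/-- Any cycle of the contraction lifts to a cycle of `G` whose component trace
deduplicates to the support of the original cycle, and whose first dart crosses cells. -/
theorem exists_cycle_lift [DecidableEq V] (hE : Ecs ⊆ G.edgeSet)
    (s : CycleType (contractionE G Ecs)) :
    ∃ t : CycleType G,
      DD (t.2.1.support.map (SimpleGraph.fromEdgeSet Ecs).connectedComponentMk)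
        s.2.1.support ∧
      ∀ d, t.2.1.darts.head? = some d →
        (SimpleGraph.fromEdgeSet Ecs).connectedComponentMk d.toProd.1 ≠
          (SimpleGraph.fromEdgeSet Ecs).connectedComponentMk d.toProd.2 := by
  obtain ⟨C, c', hc'⟩ := s
  cases c' with
  | nil => exact absurd hc' Walk.IsCycle.not_of_nil
  | cons h q' =>
    rename_i C₂
    have hq' : q'.IsPath := ((Walk.cons_isCycle_iff q' h).mp hc').1
    have h3 : 3 ≤ q'.length + 1 := by
      have := hc'.three_le_length
      simpa using this
    obtain ⟨hne, x, y, hx, hy, hadj⟩ := contraction_adj.mp h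
    obtain ⟨w, hDD, hnd, hcomps⟩ :=
      exists_lift_walk hE q' hq'.support_nodup y x hy hx
    have hlen : q'.support.length ≤ w.support.length := by
      have := hDD.length_le
      simpa using this
    have hcyc : (Walk.cons hadj w).IsCycle := by
      apply isCycle_of_tail_nodup
      · rw [Walk.length_cons]
        rw [Walk.length_support, Walk.length_support] at hlen
        omega
      · rw [Walk.support_cons, List.tail_cons]
        exact hnd
    refine ⟨⟨x, Walk.cons hadj w, hcyc⟩, ?_, ?_⟩
    · show DD ((SimpleGraph.fromEdgeSet Ecs).connectedComponentMk x ::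
          w.support.map (SimpleGraph.fromEdgeSet Ecs).connectedComponentMk)
        (C :: q'.support)
      rw [hx]
      apply hDD.cons_ne
      intro z l' hl
      have h1 : w.support = y :: w.support.tail := w.support_eq_cons
      rw [h1, List.map_cons, List.cons.injEq] at hl
      rw [← hl.1, hy]
      exact hne
    · intro d hd
      rw [show (⟨x, ⟨Walk.cons hadj w, hcyc⟩⟩ : CycleType G).2.1 = Walk.cons hadj w from rfl,
        Walk.darts_cons, List.head?_cons, Option.some.injEq] at hd
      rw [← hd]
      rw [hx, hy]
      exact hne

end CycleLift

section Uniq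

variable {V : Type*}

/-- A based cycle is determined by the support of its walk. -/
theorem cycleType_eq_of_support_eq {G : SimpleGraph V} {s t : CycleType G}
    (h : s.2.1.support = t.2.1.support) : s = t := by
  obtain ⟨v, c, hc⟩ := s
  obtain ⟨w, d, hd⟩ := t
  have hv : v = w := by
    have h1 := congrArg List.head? h
    rw [c.support_eq_cons, d.support_eq_cons] at h1
    simp only [List.head?_cons, Option.some.injEq] at h1; exact h1
  subst hv
  have := walk_ext c d h
  subst this
  rfl

theorem cycleType_finite [Fintype V] [DecidableEq V] {G : SimpleGraph V} :
    Finite (CycleType G) := by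
  classical
  set N := Fintype.card V + 2 with hN
  apply Finite.of_injective (fun s : CycleType G => (fun i : Fin N => s.2.1.support[(i : ℕ)]?))
  intro s t h
  apply cycleType_eq_of_support_eq
  have hlen : ∀ (u : V) (c : G.Walk u u), c.IsCycle → c.support.length ≤ N - 1 := by
    intro u c hc
    have h1 : c.support.tail.length ≤ Fintype.card V := hc.support_nodup.length_le_card
    have h2 : c.support = u :: c.support.tail := c.support_eq_cons
    have := congrArg List.length h2
    simp only [List.length_cons] at this
    omega
  apply List.ext_getElem?
  intro i
  by_cases hi : i < N
  · exact congrFun h ⟨i, hi⟩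
  · rw [List.getElem?_eq_none, List.getElem?_eq_none]
    · have := hlen t.1 t.2.1 t.2.2
      omega
    · have := hlen s.1 s.2.1 s.2.2
      omega

end Uniq


section NoEquiv

variable {V : Type*} {G : SimpleGraph V} {Ecs : Set (Sym2 V)}

/-- If some edge of `Ecs` lies on a cycle of `G`, there is no bijection between based
cycles of `G` and of the contraction. -/
theorem no_equiv_of_cycle_with_Ecs_edge [Fintype V] [DecidableEq V]
    (hE : Ecs ⊆ G.edgeSet) {v : V} (c : G.Walk v v) (hc : c.IsCycle)
    {ε : Sym2 V} (hε : ε ∈ Ecs) (hmem : ε ∈ c.edges) :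
    ¬ Nonempty (CycleType G ≃ CycleType (contractionE G Ecs)) := by
  rintro ⟨Φ⟩
  obtain ⟨d, hd, hde⟩ : ∃ d ∈ c.darts, d.edge = ε := List.mem_map.mp hmem
  have hfst : d.toProd.1 ∈ c.support := c.dart_fst_mem_support_of_mem_darts hd
  set c₂ := c.rotate _ hfst with hc₂def
  have hc₂ : c₂.IsCycle := hc.rotate hfst
  -- the first dart of c₂ is d
  have hdartslen : c₂.darts.length = c.darts.length :=
    (c.rotate_darts _ hfst).perm.length_eq
  have hnonnil : c₂.darts ≠ [] := by
    intro hnil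
    have h1 := hc.three_le_length
    rw [← Walk.length_darts] at h1
    rw [← hdartslen, hnil] at h1
    simp at h1
  obtain ⟨d₂, hd₂⟩ : ∃ d₂, c₂.darts.head? = some d₂ := by
    cases h : c₂.darts with
    | nil => exact absurd h hnonnil
    | cons a l => exact ⟨a, by simp [h]⟩
  have hd₂mem : d₂ ∈ c.darts := by
    have : d₂ ∈ c₂.darts := List.mem_of_mem_head? hd₂
    exact ((c.rotate_darts _ hfst).perm.mem_iff).mp this
  have hd₂fst : d₂.toProd.1 = d.toProd.1 := head_dart_fst c₂ d₂ hd₂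
  have hd₂eq : d₂ = d := dart_eq_of_fst_eq hc hd₂mem hd hd₂fst
  -- the first dart of c₂ joins two vertices in the same component
  have hsame : (SimpleGraph.fromEdgeSet Ecs).connectedComponentMk d.toProd.1 =
      (SimpleGraph.fromEdgeSet Ecs).connectedComponentMk d.toProd.2 := by
    apply SimpleGraph.ConnectedComponent.connectedComponentMk_eq_of_adj
    rw [SimpleGraph.fromEdgeSet_adj]
    refine ⟨?_, d.adj.ne⟩
    rw [show s(d.toProd.1, d.toProd.2) = d.edge from rfl, hde]
    exact hε
  -- choice of lifts
  have hchoice := fun s => exists_cycle_lift hE (Ecs := Ecs) (G := G) s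
  choose J hJDD hJdart using hchoice
  haveI : Finite (CycleType G) := cycleType_finite
  have hJinj : Function.Injective J := by
    intro s t h
    apply cycleType_eq_of_support_eq
    have h1 := hJDD s
    have h2 := hJDD t
    rw [h] at h1
    exact h1.det h2
  have hfinj : Function.Injective (fun s => J (Φ s)) :=
    fun s t h => Φ.injective (hJinj h)
  have hfsurj := Finite.injective_iff_surjective.mp hfinj
  obtain ⟨s₀, hs₀⟩ := hfsurj ⟨d.toProd.1, c₂, hc₂⟩
  have hdart := hJdart (Φ s₀) d₂
  have hcast : (J (Φ s₀)).2.1.darts.head? = c₂.darts.head? :=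
    congrArg (fun z : CycleType G => z.2.1.darts.head?) hs₀
  rw [hcast] at hdart
  have := hdart hd₂
  rw [hd₂eq] at this
  exact this hsame

end NoEquiv


section Bridge

variable {V : Type*} {G T : SimpleGraph V} {Ecs : Set (Sym2 V)}

/-- Any `G`-walk avoiding `ε` can be turned into a `T`-walk avoiding `ε`,
using fundamental tree paths. -/
theorem t_walk_avoid [DecidableEq V] (hTG : T ≤ G) (hT : T.IsTree) (hE : Ecs ⊆ G.edgeSet)
    (hfund : ∀ a b : V, G.Adj a b → ¬T.Adj a b →
      ∀ p : T.Walk a b, p.IsPath → ∀ ε ∈ Ecs, ε ∉ p.edges)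
    {ε : Sym2 V} (hε : ε ∈ Ecs) :
    ∀ {x y : V} (W : G.Walk x y), (∀ e ∈ W.edges, e ≠ ε) → ∃ W' : T.Walk x y, ε ∉ W'.edges := by
  intro x y W
  induction W with
  | nil => exact fun _ => ⟨Walk.nil, by simp⟩
  | cons ha W ih =>
    rename_i x z y'
    intro havoid
    obtain ⟨W'', hW''⟩ := ih fun e he => havoid e (by rw [Walk.edges_cons]; exact List.mem_cons_of_mem _ he)
    by_cases hTadj : T.Adj x z
    · refine ⟨Walk.cons hTadj W'', ?_⟩
      rw [Walk.edges_cons, List.mem_cons]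
      rintro (h | h)
      · exact havoid _ (by rw [Walk.edges_cons]; exact List.mem_cons_self) h.symm
      · exact hW'' h
    · obtain ⟨pw⟩ := hT.isConnected x z
      have hp := pw.toPath
      have hnot := hfund x z ha hTadj hp.1 hp.2 ε hε
      refine ⟨(hp.1).append W'', ?_⟩
      rw [Walk.edges_append, List.mem_append]
      rintro (h | h)
      · exact hnot h
      · exact hW'' h

/-- Under the row-vanishing condition, every edge of `Ecs` is a bridge of `G`. -/
theorem bridge_of_mem_Ecs [DecidableEq V] (hTG : T ≤ G) (hT : T.IsTree) (hE : Ecs ⊆ G.edgeSet)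
    (hsub : Ecs ⊆ T.edgeSet)
    (hfund : ∀ a b : V, G.Adj a b → ¬T.Adj a b →
      ∀ p : T.Walk a b, p.IsPath → ∀ ε ∈ Ecs, ε ∉ p.edges) :
    ∀ ε ∈ Ecs, G.IsBridge ε := by
  intro ε hε
  induction ε with
  | _ a b =>
    have hTab : T.Adj a b := T.mem_edgeSet.mp (hsub hε)
    have hGab : G.Adj a b := hTG hTab
    rw [SimpleGraph.isBridge_iff]
    rintro ⟨W0⟩
    have hle : (G.deleteEdges {s(a, b)}) ≤ G := sdiff_le
    have havoid : ∀ e ∈ (liftWalk hle W0).edges, e ≠ s(a, b) := by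
      intro e he
      rw [edges_liftWalk] at he
      have h1 := W0.edges_subset_edgeSet he
      rw [SimpleGraph.deleteEdges, SimpleGraph.edgeSet_sdiff, SimpleGraph.edgeSet_fromEdgeSet] at h1
      intro hcontra
      apply h1.2
      refine ⟨by simp [hcontra], ?_⟩
      rw [hcontra]
      simp [Sym2.isDiag_iff_proj_eq, hGab.ne]
    obtain ⟨W', hW'⟩ := t_walk_avoid hTG hT hE hfund hε (liftWalk hle W0) havoid
    have hPavoid : s(a, b) ∉ (W'.toPath : T.Walk a b).edges :=
      fun h => hW' (W'.edges_toPath_subset h)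
    have hQ : (Walk.cons hTab (Walk.nil : T.Walk b b)).IsPath := by
      simp [Walk.isPath_def, hTab.ne]
    have huniq := hT.IsAcyclic.path_unique W'.toPath ⟨Walk.cons hTab Walk.nil, hQ⟩
    apply hPavoid
    rw [huniq]
    simp

end Bridge


section BridgeUse

variable {V : Type*} {G : SimpleGraph V} {Ecs : Set (Sym2 V)}

theorem mk_inj_on_cycle [DecidableEq V] (hE : Ecs ⊆ G.edgeSet)
    (hbr : ∀ ε ∈ Ecs, G.IsBridge ε) {v : V} {c : G.Walk v v} (hc : c.IsCycle)
    {u w : V} (hu : u ∈ c.support) (hw : w ∈ c.support)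
    (h : (SimpleGraph.fromEdgeSet Ecs).connectedComponentMk u =
      (SimpleGraph.fromEdgeSet Ecs).connectedComponentMk w) : u = w := by
  by_contra hne
  obtain ⟨P0⟩ := SimpleGraph.ConnectedComponent.exact h
  obtain ⟨p, hp⟩ := P0.toPath
  cases p with
  | nil => exact hne rfl
  | cons h₀ P' =>
    rename_i z
    have heE : s(u, z) ∈ Ecs := ((SimpleGraph.fromEdgeSet_adj _).mp h₀).1
    have hbridge := hbr _ heE
    have hnotcyc : s(u, z) ∉ c.edges :=
      (SimpleGraph.isBridge_iff_adj_and_forall_cycle_notMem (hE heE)).mp hbridge c hc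
    have hnr := SimpleGraph.isBridge_iff.mp hbridge
    have hPedge : s(u, z) ∉ P'.edges := by
      have htr := hp.isTrail.edges_nodup
      rw [Walk.edges_cons] at htr
      exact (List.nodup_cons.mp htr).1
    let W : G.Walk u z :=
      ((c.dropUntil u hu).append (c.takeUntil w hw)).append
        ((liftWalk (hH_le hE) P').reverse)
    have havoid : ∀ e' ∈ W.edges, e' ∉ ({s(u, z)} : Set (Sym2 V)) := by
      intro e' he'
      simp only [Set.mem_singleton_iff]
      intro hcontra
      subst hcontra
      rw [show W = ((c.dropUntil u hu).append (c.takeUntil w hw)).append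
        ((liftWalk (hH_le hE) P').reverse) from rfl] at he'
      rw [Walk.edges_append, List.mem_append, Walk.edges_append, List.mem_append,
        Walk.edges_reverse, List.mem_reverse, edges_liftWalk] at he'
      rcases he' with (he' | he') | he'
      · exact hnotcyc (c.edges_dropUntil_subset hu he')
      · exact hnotcyc (c.edges_takeUntil_subset hw he')
      · exact hPedge he'
    have hreach : (G.deleteEdges {s(u, z)}).Reachable u z :=
      (Walk.toDeleteEdges {s(u, z)} W havoid).reachable
    exact hnr hreach

theorem cross_unique [DecidableEq V] (hE : Ecs ⊆ G.edgeSet)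
    (hbr : ∀ ε ∈ Ecs, G.IsBridge ε) {u v u' v' : V}
    (huv : G.Adj u v) (hu'v' : G.Adj u' v')
    (hu : (SimpleGraph.fromEdgeSet Ecs).connectedComponentMk u =
      (SimpleGraph.fromEdgeSet Ecs).connectedComponentMk u')
    (hv : (SimpleGraph.fromEdgeSet Ecs).connectedComponentMk v =
      (SimpleGraph.fromEdgeSet Ecs).connectedComponentMk v')
    (hcross : (SimpleGraph.fromEdgeSet Ecs).connectedComponentMk u ≠
      (SimpleGraph.fromEdgeSet Ecs).connectedComponentMk v) : u = u' := by
  by_contra hne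
  obtain ⟨P0⟩ := SimpleGraph.ConnectedComponent.exact hu
  obtain ⟨p, hp⟩ := P0.toPath
  cases p with
  | nil => exact hne rfl
  | cons h₀ P' =>
    rename_i z
    have heE : s(u, z) ∈ Ecs := ((SimpleGraph.fromEdgeSet_adj _).mp h₀).1
    have hzu : (SimpleGraph.fromEdgeSet Ecs).connectedComponentMk z =
        (SimpleGraph.fromEdgeSet Ecs).connectedComponentMk u :=
      (SimpleGraph.ConnectedComponent.connectedComponentMk_eq_of_adj h₀).symm
    have hbridge := hbr _ heE
    have hnr := SimpleGraph.isBridge_iff.mp hbridge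
    obtain ⟨Q0⟩ := SimpleGraph.ConnectedComponent.exact hv
    obtain ⟨q, hq⟩ := Q0.toPath
    have hPedge : s(u, z) ∉ P'.edges := by
      have htr := hp.isTrail.edges_nodup
      rw [Walk.edges_cons] at htr
      exact (List.nodup_cons.mp htr).1
    let W : G.Walk u z := Walk.cons huv ((liftWalk (hH_le hE) q).append
      (Walk.cons hu'v'.symm ((liftWalk (hH_le hE) P').reverse)))
    have havoid : ∀ e' ∈ W.edges, e' ∉ ({s(u, z)} : Set (Sym2 V)) := by
      intro e' he'
      simp only [Set.mem_singleton_iff]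
      intro hcontra
      subst hcontra
      rw [show W = Walk.cons huv ((liftWalk (hH_le hE) q).append
        (Walk.cons hu'v'.symm ((liftWalk (hH_le hE) P').reverse))) from rfl] at he'
      rw [Walk.edges_cons, List.mem_cons, Walk.edges_append, List.mem_append,
        Walk.edges_cons, List.mem_cons, Walk.edges_reverse, List.mem_reverse,
        edges_liftWalk, edges_liftWalk] at he'
      rcases he' with he' | (he' | (he' | he'))
      · rw [Sym2.eq_iff] at he'
        rcases he' with ⟨-, hzv⟩ | ⟨huv2, -⟩
        · exact hcross (by rw [← hzv]; exact hzu.symm)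
        · exact hcross (congrArg _ huv2)
      · have hmem : u ∈ q.support := q.fst_mem_support_of_mem_edges he'
        exact hcross (mk_eq_of_mem_support q hmem)
      · rw [Sym2.eq_iff] at he'
        rcases he' with ⟨huv', -⟩ | ⟨huu', -⟩
        · exact hcross ((congrArg _ huv').trans hv.symm)
        · exact hne huu' 
      · exact hPedge he'
    have hreach : (G.deleteEdges {s(u, z)}).Reachable u z :=
      (Walk.toDeleteEdges {s(u, z)} W havoid).reachable
    exact hnr hreach

end BridgeUse


section PushCycle

variable {V : Type*} {G : SimpleGraph V} {Ecs : Set (Sym2 V)}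

theorem support_walks_eq [DecidableEq V] (hE : Ecs ⊆ G.edgeSet)
    (hbr : ∀ ε ∈ Ecs, G.IsBridge ε) :
    ∀ {a b : V} (p : G.Walk a b) {a' b' : V} (p' : G.Walk a' b'),
      (∀ d ∈ p.darts, (SimpleGraph.fromEdgeSet Ecs).connectedComponentMk d.toProd.1 ≠
        (SimpleGraph.fromEdgeSet Ecs).connectedComponentMk d.toProd.2) →
      (∀ d ∈ p'.darts, (SimpleGraph.fromEdgeSet Ecs).connectedComponentMk d.toProd.1 ≠
        (SimpleGraph.fromEdgeSet Ecs).connectedComponentMk d.toProd.2) →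
      a = a' →
      p.support.map (SimpleGraph.fromEdgeSet Ecs).connectedComponentMk =
        p'.support.map (SimpleGraph.fromEdgeSet Ecs).connectedComponentMk →
      p.support = p'.support
  | a, _, .nil, a', b', p', h1, h2, ha, hmap => by
    cases p' with
    | nil => rw [Walk.support_nil, Walk.support_nil, ha]
    | cons h q =>
      exfalso
      have := congrArg List.length hmap
      simp [Walk.length_support] at this
  | a, b, .cons (v := c) hadj q, a', b', p', h1, h2, ha, hmap => by
    subst ha
    cases p' with
    | nil =>
      exfalso
      have := congrArg List.length hmap
      simp [Walk.length_support] at this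
    | cons hadj' q' =>
      rename_i c'
      rw [Walk.support_cons, Walk.support_cons, List.map_cons, List.map_cons,
        List.cons.injEq] at hmap
      have htl := hmap.2
      have hc : (SimpleGraph.fromEdgeSet Ecs).connectedComponentMk c =
          (SimpleGraph.fromEdgeSet Ecs).connectedComponentMk c' := by
        have h3 := congrArg List.head? htl
        rw [q.support_eq_cons, q'.support_eq_cons] at h3
        simp only [List.map_cons, List.head?_cons, Option.some.injEq] at h3; exact h3
      have hcrossd : (SimpleGraph.fromEdgeSet Ecs).connectedComponentMk a ≠
          (SimpleGraph.fromEdgeSet Ecs).connectedComponentMk c :=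
        h1 ⟨(a, c), hadj⟩ (by rw [Walk.darts_cons]; exact List.mem_cons_self)
      have hcc : c = c' :=
        cross_unique hE hbr hadj.symm hadj'.symm hc rfl (Ne.symm hcrossd)
      subst hcc
      rw [Walk.support_cons, Walk.support_cons]
      congr 1
      exact support_walks_eq hE hbr q q'
        (fun d hd => h1 d (by rw [Walk.darts_cons]; exact List.mem_cons_of_mem _ hd))
        (fun d hd => h2 d (by rw [Walk.darts_cons]; exact List.mem_cons_of_mem _ hd))
        rfl htl

theorem exists_push [DecidableEq V] (hE : Ecs ⊆ G.edgeSet)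
    (hbr : ∀ ε ∈ Ecs, G.IsBridge ε) (s : CycleType G) :
    ∃ t : CycleType (contractionE G Ecs),
      t.2.1.support = s.2.1.support.map (SimpleGraph.fromEdgeSet Ecs).connectedComponentMk := by
  obtain ⟨v, c, hc⟩ := s
  have hdart : ∀ d ∈ c.darts,
      (SimpleGraph.fromEdgeSet Ecs).connectedComponentMk d.toProd.1 ≠
      (SimpleGraph.fromEdgeSet Ecs).connectedComponentMk d.toProd.2 := by
    intro d hd hmk
    exact d.adj.ne (mk_inj_on_cycle hE hbr hc (c.dart_fst_mem_support_of_mem_darts hd)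
      (c.dart_snd_mem_support_of_mem_darts hd) hmk)
  have hmemtail : ∀ x ∈ c.support.tail, x ∈ c.support := by
    intro x hx
    rw [c.support_eq_cons]
    exact List.mem_cons_of_mem _ hx
  refine ⟨⟨(SimpleGraph.fromEdgeSet Ecs).connectedComponentMk v,
    pushWalk _ c hdart, ?_⟩, ?_⟩
  · apply isCycle_of_tail_nodup
    · erw [length_pushWalk]
      exact hc.three_le_length
    · have hsup : (pushWalk _ c hdart).support =
        c.support.map (SimpleGraph.fromEdgeSet Ecs).connectedComponentMk :=
        support_pushWalk _ c hdart
      erw [hsup, c.support_eq_cons, List.map_cons, List.tail_cons]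
      apply (hc.support_nodup).map_on
      intro x hx y hy hxy
      exact mk_inj_on_cycle hE hbr hc (hmemtail x hx) (hmemtail y hy) hxy
  · exact support_pushWalk _ c hdart

theorem push_inj [DecidableEq V] (hE : Ecs ⊆ G.edgeSet)
    (hbr : ∀ ε ∈ Ecs, G.IsBridge ε) {s t : CycleType G}
    (h : s.2.1.support.map (SimpleGraph.fromEdgeSet Ecs).connectedComponentMk =
      t.2.1.support.map (SimpleGraph.fromEdgeSet Ecs).connectedComponentMk) : s = t := by
  obtain ⟨v, c, hc⟩ := s
  obtain ⟨v', c', hc'⟩ := t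
  have hd1 : ∀ d ∈ c.darts,
      (SimpleGraph.fromEdgeSet Ecs).connectedComponentMk d.toProd.1 ≠
      (SimpleGraph.fromEdgeSet Ecs).connectedComponentMk d.toProd.2 := by
    intro d hd hmk
    exact d.adj.ne (mk_inj_on_cycle hE hbr hc (c.dart_fst_mem_support_of_mem_darts hd)
      (c.dart_snd_mem_support_of_mem_darts hd) hmk)
  have hd2 : ∀ d ∈ c'.darts,
      (SimpleGraph.fromEdgeSet Ecs).connectedComponentMk d.toProd.1 ≠
      (SimpleGraph.fromEdgeSet Ecs).connectedComponentMk d.toProd.2 := by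
    intro d hd hmk
    exact d.adj.ne (mk_inj_on_cycle hE hbr hc' (c'.dart_fst_mem_support_of_mem_darts hd)
      (c'.dart_snd_mem_support_of_mem_darts hd) hmk)
  have hmap : c.support.map (SimpleGraph.fromEdgeSet Ecs).connectedComponentMk =
      c'.support.map (SimpleGraph.fromEdgeSet Ecs).connectedComponentMk := h
  cases c with
  | nil => exact absurd hc Walk.IsCycle.not_of_nil
  | cons hadj q =>
    rename_i u₁
    cases c' with
    | nil => exact absurd hc' Walk.IsCycle.not_of_nil
    | cons hadj' q' =>
      rename_i u₁'
      have hmap2 := hmap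
      rw [Walk.support_cons, Walk.support_cons, List.map_cons, List.map_cons,
        List.cons.injEq] at hmap2
      have hmkv := hmap2.1
      have hmku : (SimpleGraph.fromEdgeSet Ecs).connectedComponentMk u₁ =
          (SimpleGraph.fromEdgeSet Ecs).connectedComponentMk u₁' := by
        have h3 := congrArg List.head? hmap2.2
        rw [q.support_eq_cons, q'.support_eq_cons] at h3
        simp only [List.map_cons, List.head?_cons, Option.some.injEq] at h3; exact h3
      have hcross : (SimpleGraph.fromEdgeSet Ecs).connectedComponentMk v ≠
          (SimpleGraph.fromEdgeSet Ecs).connectedComponentMk u₁ :=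
        hd1 ⟨(v, u₁), hadj⟩ (by rw [Walk.darts_cons]; exact List.mem_cons_self)
      have hvv : v = v' := cross_unique hE hbr hadj hadj' hmkv hmku hcross
      subst hvv
      have hsupp := support_walks_eq hE hbr (Walk.cons hadj q) (Walk.cons hadj' q')
        hd1 hd2 rfl hmap
      exact cycleType_eq_of_support_eq hsupp

end PushCycle

end CInvMain

open CInvAux CInvAux2 CInvMain in
/-- Let `T` be a spanning tree of `G` (with co-tree `G \ E(T)`) and
`E_cs ⊆ E(G)`. Then `G ⫽ E_cs` is cycle-invariant (a one-to-one correspondence between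
simple cycles of `G` and of `G ⫽ E_cs`) iff `E_cs ⊆ E(T)` and no edge of `E_cs` lies on
the fundamental tree-path of any co-tree edge (i.e., the corresponding rows of the Tucker
representation are all zero). -/
theorem cycle_invariant_iff_tucker_rows_zero {n : ℕ}
    (G T : SimpleGraph (Fin n)) (hG : G.Connected) (hTG : T ≤ G) (hT : T.IsTree)
    (Ecs : Set (Sym2 (Fin n))) (hE : Ecs ⊆ G.edgeSet) :
    Nonempty (CycleType G ≃ CycleType (contractionE G Ecs)) ↔
      (Ecs ⊆ T.edgeSet ∧
        ∀ a b : Fin n, G.Adj a b → ¬T.Adj a b →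
          ∀ p : T.Walk a b, p.IsPath → ∀ ε ∈ Ecs, ε ∉ p.edges) := by
  constructor
  · -- cycle invariance implies the Tucker rows vanish
    intro hne
    by_contra hnot
    rw [not_and_or] at hnot
    have hkey : ∃ (ε : Sym2 (Fin n)), ε ∈ Ecs ∧
        ∃ (v : Fin n) (c : G.Walk v v), c.IsCycle ∧ ε ∈ c.edges := by
      rcases hnot with h1 | h2
      · obtain ⟨ε, hε, hnotT⟩ := Set.not_subset.mp h1
        revert hε hnotT
        induction ε using Sym2.ind with
        | _ a b =>
          intro hε hnotT
          have hGab : G.Adj a b := G.mem_edgeSet.mp (hE hε)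
          have hnTab : ¬T.Adj a b := fun h => hnotT (T.mem_edgeSet.mpr h)
          obtain ⟨pw⟩ := hT.isConnected b a
          have hp := pw.toPath
          have hpath : (liftWalk hTG (hp : T.Walk b a)).IsPath := by
            apply SimpleGraph.Walk.IsPath.mk'
            rw [support_liftWalk]
            exact hp.2.support_nodup
          have he : s(a, b) ∉ (liftWalk hTG (hp : T.Walk b a)).edges := by
            rw [edges_liftWalk]
            intro hmem
            exact hnotT ((hp : T.Walk b a).edges_subset_edgeSet hmem)
          have hcyc := SimpleGraph.Path.cons_isCycle
            ⟨liftWalk hTG (hp : T.Walk b a), hpath⟩ hGab he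
          exact ⟨s(a, b), hε, a, _, hcyc, by
            rw [SimpleGraph.Walk.edges_cons]; exact List.mem_cons_self⟩
      · push_neg at h2
        obtain ⟨a, b, hGab, hnT, p, hp, ε₀, hε₀, hmemp⟩ := h2
        have hpath : (liftWalk hTG p).IsPath := by
          apply SimpleGraph.Walk.IsPath.mk'
          rw [support_liftWalk]
          exact hp.support_nodup
        have he : s(b, a) ∉ (liftWalk hTG p).edges := by
          rw [edges_liftWalk]
          intro hmem
          have hlen := length_eq_one_of_closing_edge p hp.support_nodup hmem
          exact hnT (adj_of_length_eq_one p hlen)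
        have hcyc := SimpleGraph.Path.cons_isCycle ⟨liftWalk hTG p, hpath⟩ hGab.symm he
        refine ⟨ε₀, hε₀, b, _, hcyc, ?_⟩
        rw [SimpleGraph.Walk.edges_cons]
        refine List.mem_cons_of_mem _ ?_
        rw [show ((⟨liftWalk hTG p, hpath⟩ : G.Path a b) : G.Walk a b) =
          liftWalk hTG p from rfl, edges_liftWalk]
        exact hmemp
    obtain ⟨ε, hε, v, c, hc, hmem⟩ := hkey
    exact no_equiv_of_cycle_with_Ecs_edge hE c hc hε hmem hne
  · -- the Tucker rows vanish implies cycle invariance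
    rintro ⟨hsub, hfund⟩
    have hbr := bridge_of_mem_Ecs hTG hT hE hsub hfund
    have hpush := fun s => exists_push (G := G) hE hbr s
    choose F hF using hpush
    have hFinj : Function.Injective F := by
      intro s t h
      apply push_inj hE hbr
      rw [← hF s, ← hF t, h]
    have hlift := fun s => exists_cycle_lift (G := G) (Ecs := Ecs) hE s
    choose J hJDD hJdart using hlift
    have hJinj : Function.Injective J := by
      intro s t h
      apply cycleType_eq_of_support_eq
      have h1 := hJDD s
      rw [h] at h1
      exact h1.det (hJDD t)
    obtain ⟨f, hbijf⟩ := Function.Embedding.schroeder_bernstein hFinj hJinj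
    exact ⟨Equiv.ofBijective f hbijf⟩
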